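/- The softmax function σ: ℝ^γ → (0,1)^γ defined by σ(z)_j = e^{z_j} / Σ_{i=1}^γ e^{z_i} is 1-Lipschitz with respect to the Euclidean norm. -/

import Mathlib

variable {γ : ℕ}

/-- The softmax function on `ℝ^γ`. -/
noncomputable def softmax {γ : ℕ} (z : EuclideanSpace ℝ (Fin γ)) : EuclideanSpace ℝ (Fin γ) :=
  WithLp.toLp 2 (fun j => Real.exp (z j) / ∑ i, Real.exp (z i))

/-- the linear map that is the derivative of softmax at `z`. -/
noncomputable def smLin (z : EuclideanSpace ℝ (Fin γ)) :
    EuclideanSpace ℝ (Fin γ) →L[ℝ] EuclideanSpace ℝ (Fin γ) :=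
  LinearMap.toContinuousLinearMap
    { toFun := fun v => (WithLp.toLp 2 fun j => softmax z j * (v j - ∑ i, softmax z i * v i) :
        EuclideanSpace ℝ (Fin γ))
      map_add' := by
        intro u v
        ext j
        simp only [PiLp.add_apply, mul_add, Finset.sum_add_distrib]
        ring
      map_smul' := by
        intro c v
        ext j
        simp only [PiLp.smul_apply, smul_eq_mul, RingHom.id_apply]
        have h : ∑ x, softmax z x * (c * v x) = c * ∑ x, softmax z x * v x := by
          rw [Finset.mul_sum]
          exact Finset.sum_congr rfl (fun x _ => by ring)
        rw [h]
        ring }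

@[simp] lemma smLin_apply (z v : EuclideanSpace ℝ (Fin γ)) (j : Fin γ) :
    smLin z v j = softmax z j * (v j - ∑ i, softmax z i * v i) := rfl

lemma softmax_nonneg (z : EuclideanSpace ℝ (Fin γ)) (j : Fin γ) : 0 ≤ softmax z j := by
  unfold softmax
  simp only [PiLp.toLp_apply]
  positivity

lemma softmax_le_one (z : EuclideanSpace ℝ (Fin γ)) (j : Fin γ) : softmax z j ≤ 1 := by
  unfold softmax
  have h : Real.exp (z j) ≤ ∑ i, Real.exp (z i) :=
    Finset.single_le_sum (fun i _ => (Real.exp_pos (z i)).le) (Finset.mem_univ j)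
  have h0 : (0:ℝ) < ∑ i, Real.exp (z i) :=
    lt_of_lt_of_le (Real.exp_pos (z j)) h
  rw [div_le_one h0]
  exact h

lemma softmax_sum_le_one (z : EuclideanSpace ℝ (Fin γ)) : ∑ j, softmax z j ≤ 1 := by
  rcases Nat.eq_zero_or_pos γ with h | h
  · subst h; simp
  · have h0 : (0:ℝ) < ∑ i, Real.exp (z i) := by
      have : Nonempty (Fin γ) := Fin.pos_iff_nonempty.mp h
      exact Finset.sum_pos (fun i _ => Real.exp_pos (z i)) Finset.univ_nonempty
    unfold softmax
    rw [← Finset.sum_div, div_le_one h0]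

/-- key quadratic inequality -/
lemma key_ineq (a v : Fin γ → ℝ) (ha0 : ∀ j, 0 ≤ a j) (ha1 : ∀ j, a j ≤ 1)
    (hT : ∑ j, a j ≤ 1) :
    ∑ j, (a j * (v j - ∑ i, a i * v i))^2 ≤ ∑ j, (v j)^2 := by
  set s : ℝ := ∑ i, a i * v i with hs
  have step1 : ∑ j, (a j * (v j - s))^2 ≤ ∑ j, a j * (v j - s)^2 := by
    apply Finset.sum_le_sum
    intro j _
    have : (a j * (v j - s))^2 = (a j) * (a j * (v j - s)^2) := by ring
    rw [this]
    nlinarith [mul_nonneg (mul_nonneg (ha0 j) (sub_nonneg.2 (ha1 j))) (sq_nonneg (v j - s))]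
  have expand : ∑ j, a j * (v j - s)^2
      = (∑ j, a j * (v j)^2) - 2 * s * s + s^2 * (∑ j, a j) := by
    have h : ∀ j, a j * (v j - s)^2 = a j * (v j)^2 - 2 * s * (a j * v j) + s^2 * a j := by
      intro j; ring
    simp_rw [h]
    rw [Finset.sum_add_distrib, Finset.sum_sub_distrib, ← Finset.mul_sum, ← Finset.mul_sum, ← hs]
  have step2 : (∑ j, a j * (v j)^2) - 2 * s * s + s^2 * (∑ j, a j) ≤ ∑ j, a j * (v j)^2 := by
    nlinarith [sq_nonneg s, hT]
  have step3 : ∑ j, a j * (v j)^2 ≤ ∑ j, (v j)^2 := by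
    apply Finset.sum_le_sum
    intro j _
    nlinarith [ha0 j, ha1 j, sq_nonneg (v j)]
  linarith [step1, expand ▸ step1]

lemma smLin_norm_le (z : EuclideanSpace ℝ (Fin γ)) : ‖smLin z‖ ≤ 1 := by
  apply ContinuousLinearMap.opNorm_le_bound _ zero_le_one
  intro v
  rw [one_mul]
  rw [EuclideanSpace.norm_eq, EuclideanSpace.norm_eq]
  apply Real.sqrt_le_sqrt
  calc ∑ j, ‖smLin z v j‖^2
      = ∑ j, (softmax z j * (v j - ∑ i, softmax z i * v i))^2 := by
        simp [Real.norm_eq_abs, mul_pow, sq_abs]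
    _ ≤ ∑ j, (v j)^2 :=
        key_ineq (softmax z) v (softmax_nonneg z) (softmax_le_one z) (softmax_sum_le_one z)
    _ = ∑ j, ‖v j‖^2 := by simp [sq_abs, Real.norm_eq_abs]


set_option maxHeartbeats 1000000 in
lemma softmax_hasFDerivAt (hγ : 0 < γ) (z : EuclideanSpace ℝ (Fin γ)) :
    HasFDerivAt softmax (smLin z) z := by
  have hne : Nonempty (Fin γ) := Fin.pos_iff_nonempty.mp hγ
  have hS : (0:ℝ) < ∑ i, Real.exp (z i) :=
    Finset.sum_pos (fun i _ => Real.exp_pos _) Finset.univ_nonempty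
  have hexp : ∀ j : Fin γ, HasFDerivAt (fun y : EuclideanSpace ℝ (Fin γ) => Real.exp (y j))
      (Real.exp (z j) • (EuclideanSpace.proj j : EuclideanSpace ℝ (Fin γ) →L[ℝ] ℝ)) z :=
    fun j => (EuclideanSpace.proj j : EuclideanSpace ℝ (Fin γ) →L[ℝ] ℝ).hasFDerivAt.exp
  have hSum : HasFDerivAt (fun y : EuclideanSpace ℝ (Fin γ) => ∑ i, Real.exp (y i))
      (∑ i, Real.exp (z i) • (EuclideanSpace.proj i : EuclideanSpace ℝ (Fin γ) →L[ℝ] ℝ)) z :=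
    HasFDerivAt.fun_sum fun i _ => hexp i
  have hInv : HasFDerivAt (fun y : EuclideanSpace ℝ (Fin γ) => (∑ i, Real.exp (y i))⁻¹)
      ((-((∑ i, Real.exp (z i)) ^ 2)⁻¹) •
        ∑ i, Real.exp (z i) • (EuclideanSpace.proj i : EuclideanSpace ℝ (Fin γ) →L[ℝ] ℝ)) z :=
    (hasDerivAt_inv hS.ne').comp_hasFDerivAt z hSum
  set D : ∀ _ : Fin γ, EuclideanSpace ℝ (Fin γ) →L[ℝ] ℝ := fun j =>
    Real.exp (z j) • ((-((∑ i, Real.exp (z i)) ^ 2)⁻¹) •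
        ∑ i, Real.exp (z i) • (EuclideanSpace.proj i : EuclideanSpace ℝ (Fin γ) →L[ℝ] ℝ))
      + (∑ i, Real.exp (z i))⁻¹ •
        (Real.exp (z j) • (EuclideanSpace.proj j : EuclideanSpace ℝ (Fin γ) →L[ℝ] ℝ)) with hD
  have hg : HasFDerivAt
      (fun y : EuclideanSpace ℝ (Fin γ) =>
        (fun j => Real.exp (y j) / ∑ i, Real.exp (y i) : Fin γ → ℝ))
      (ContinuousLinearMap.pi D) z := by
    apply hasFDerivAt_pi''
    intro j
    rw [ContinuousLinearMap.proj_pi]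
    simpa only [div_eq_mul_inv] using (hexp j).fun_mul hInv
  have heq : ((PiLp.continuousLinearEquiv 2 ℝ (fun _ : Fin γ => ℝ)).symm :
        (Fin γ → ℝ) →L[ℝ] EuclideanSpace ℝ (Fin γ)).comp (ContinuousLinearMap.pi D)
      = smLin z := by
    refine ContinuousLinearMap.ext fun v => PiLp.ext fun j => ?_
    show D j v = softmax z j * (v j - ∑ i, softmax z i * v i)
    rw [hD]
    simp only [ContinuousLinearMap.add_apply, ContinuousLinearMap.coe_smul',
      Pi.smul_apply, ContinuousLinearMap.coe_sum', Finset.sum_apply,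
      PiLp.proj_apply, smul_eq_mul]
    unfold softmax
    have h1 : ∑ i, Real.exp (z i) / (∑ k, Real.exp (z k)) * v i
        = (∑ i, Real.exp (z i) * v i) / (∑ k, Real.exp (z k)) := by
      rw [Finset.sum_div]
      exact Finset.sum_congr rfl (fun i _ => by ring)
    rw [h1]
    field_simp
    ring
  have hc := (((PiLp.continuousLinearEquiv 2 ℝ (fun _ : Fin γ => ℝ)).symm :
      (Fin γ → ℝ) →L[ℝ] EuclideanSpace ℝ (Fin γ)).hasFDerivAt).comp z hg
  rw [heq] at hc
  exact (by exact hc : HasFDerivAt (fun y => WithLp.toLp 2 (fun j => Real.exp (y j) / ∑ i, Real.exp (y i))) (smLin z) z)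

/-- softmax is 1-Lipschitz with respect to the Euclidean norm. -/
theorem softmax_lipschitz (γ : ℕ) :
    ∀ z w : EuclideanSpace ℝ (Fin γ), ‖softmax z - softmax w‖ ≤ 1 * ‖z - w‖ := by
  intro z w
  rcases Nat.eq_zero_or_pos γ with h | h
  · subst h
    have : z = w := Subsingleton.elim z w
    simp [this]
  · have := convex_univ.norm_image_sub_le_of_norm_hasFDerivWithin_le
      (f := softmax) (f' := fun x => smLin x) (C := 1) (s := (Set.univ : Set (EuclideanSpace ℝ (Fin γ))))
      (fun x _ => (softmax_hasFDerivAt h x).hasFDerivWithinAt)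
      (fun x _ => smLin_norm_le x) (Set.mem_univ w) (Set.mem_univ z)
    simpa using this
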